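/- arXiv:2406.00347 — 3 statements merged into one kernel-verified Lean document; each statement's English description precedes it below -/
import Mathlib

section
/- Let G be a group acting on a type X, let V be an affine space over ℝ (a real vector space viewed as an affine space), let ρ : G →* (V ≃ᵃ[ℝ] V) be a group homomorphism into the affine automorphisms of V, and let φ : X → V be any function. Suppose F : X → Finset G assigns to each x a nonempty finite frame set satisfying the frame-equivariance condition F(g • x) = (F x).image (fun h => g * h) for all g ∈ G and x ∈ X. Define the frame-averaged map Φ : X → V by Φ(x) = the affine combination of the points ρ(h) (φ (h⁻¹ • x)) for h ∈ F(x), each with equal weight 1/|F(x)|. Then Φ is equivariant: Φ(g • x) = ρ(g) (Φ(x)) for every g ∈ G and x ∈ X. -/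
/-- **Frame averaging is equivariant.**
Let `G` act on `X`, let `V` be a real vector space viewed as an affine space over `ℝ`,
let `ρ : G →* (V ≃ᵃ[ℝ] V)` be a homomorphism into the affine automorphisms of `V`, and
let `φ : X → V` be any function.  If `F : X → Finset G` assigns a nonempty frame set to
each input, and `F` is frame-equivariant, i.e. `F (g • x) = (F x).image (g * ·)`, then the
frame-averaged map `Φ x = affine combination of ρ h (φ (h⁻¹ • x)) for h ∈ F x, with equal
weights (F x).card⁻¹` is equivariant: `Φ (g • x) = ρ g (Φ x)`. -/
theorem frame_averaging_equivariant
    {G X V : Type*} [Group G] [DecidableEq G] [MulAction G X] [AddCommGroup V] [Module ℝ V]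
    (ρ : G →* V ≃ᵃ[ℝ] V) (φ : X → V) (F : X → Finset G)
    (hne : ∀ x : X, (F x).Nonempty)
    (hF : ∀ (g : G) (x : X), F (g • x) = (F x).image (fun h => g * h))
    (Φ : X → V)
    (hΦ : ∀ x : X, Φ x =
      (F x).affineCombination ℝ (fun h : G => ρ h (φ (h⁻¹ • x)))
        (fun _ : G => ((F x).card : ℝ)⁻¹)) :
    ∀ (g : G) (x : X), Φ (g • x) = ρ g (Φ x) := by
  intro g x
  rw [hΦ, hΦ]
  have hinj : Function.Injective (fun h : G => g * h) := fun a b h => by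
    simpa using mul_left_cancel h
  have hmap : (F x).image (fun h => g * h) = (F x).map ⟨_, hinj⟩ := by
    rw [Finset.map_eq_image]; rfl
  have hcard : (F (g • x)).card = (F x).card := by
    rw [hF, Finset.card_image_of_injective _ hinj]
  have hw : ((F x).sum fun _ : G => ((F x).card : ℝ)⁻¹) = 1 := by
    rw [Finset.sum_const, nsmul_eq_mul,
      mul_inv_cancel₀ (by exact_mod_cast (hne x).card_pos.ne')]
  have key : (ρ g) ((F x).affineCombination ℝ (fun h : G => ρ h (φ (h⁻¹ • x)))
      (fun _ : G => ((F x).card : ℝ)⁻¹)) =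
      (F x).affineCombination ℝ (((ρ g).toAffineMap) ∘ (fun h : G => ρ h (φ (h⁻¹ • x))))
      (fun _ : G => ((F x).card : ℝ)⁻¹) :=
    Finset.map_affineCombination _ _ _ hw ((ρ g).toAffineMap)
  rw [show F (g • x) = (F x).map ⟨_, hinj⟩ from (hF g x).trans hmap,
    Finset.affineCombination_map, key]
  refine Finset.affineCombination_congr _ (fun h _ => ?_) (fun h _ => ?_)
  · simp [Finset.card_map]
  · simp only [Function.comp_apply, AffineEquiv.coe_toAffineMap, Function.Embedding.coeFn_mk]
    rw [mul_inv_rev, mul_smul, inv_smul_smul,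
      show ρ (g * h) = ρ g * ρ h from map_mul ρ g h]
    rfl
end

section
/- Let m ≥ 1 and let x : Fin m → EuclideanSpace ℝ (Fin 3) be a point configuration whose covariance matrix Cov(x) has three pairwise distinct eigenvalues. Let F(x) be its frame set and let φ : (Fin m → EuclideanSpace ℝ (Fin 3)) → EuclideanSpace ℝ (Fin 3) be any function. Define the frame-averaged predictor Φ(x) = (1/|F(x)|) · Σ_{(Q,s) ∈ F(x)} (Q.mulVec (φ (fun i => Qᵀ.mulVec (x i − s))) + s). Then Φ is E(3)-equivariant: for every 3×3 real matrix U with U * Uᵀ = 1 and every w ∈ ℝ³, letting f(p) = U.mulVec p + w, one has Φ(fun i => f (x i)) = U.mulVec (Φ(x)) + w. -/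
open Matrix

/-- Reinterpret a plain vector `Fin 3 → ℝ` as a point of `EuclideanSpace ℝ (Fin 3)`
(the identity map on the underlying data). -/
def toE (v : Fin 3 → ℝ) : EuclideanSpace ℝ (Fin 3) := WithLp.toLp 2 v

/-- The centroid of a point configuration. -/
noncomputable def centroid {m : ℕ} (x : Fin m → EuclideanSpace ℝ (Fin 3)) :
    EuclideanSpace ℝ (Fin 3) :=
  (m : ℝ)⁻¹ • ∑ i, x i

/-- The outer product `p pᵀ` of a vector with itself. -/
def outerSq (p : EuclideanSpace ℝ (Fin 3)) : Matrix (Fin 3) (Fin 3) ℝ :=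
  Matrix.of fun a b => p a * p b

/-- The covariance matrix of a point configuration. -/
noncomputable def cov {m : ℕ} (x : Fin m → EuclideanSpace ℝ (Fin 3)) :
    Matrix (Fin 3) (Fin 3) ℝ :=
  (m : ℝ)⁻¹ • ∑ i, outerSq (x i - centroid x)

/-- `lam` lists the eigenvalues of the symmetric matrix `C` in ascending order:
it is monotone and `C` is orthogonally diagonalized with diagonal `lam`. -/
def IsSortedEigs (C : Matrix (Fin 3) (Fin 3) ℝ) (lam : Fin 3 → ℝ) : Prop :=
  Monotone lam ∧ ∃ P : Matrix (Fin 3) (Fin 3) ℝ,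
    P * Pᵀ = 1 ∧ C = P * Matrix.diagonal lam * Pᵀ

/-- The frame set of a point configuration: pairs `(Q, centroid x)` where the `j`-th column
of `Q` is a unit eigenvector of `cov x` for the `j`-th eigenvalue in ascending order. -/
noncomputable def frameSet {m : ℕ} (x : Fin m → EuclideanSpace ℝ (Fin 3)) :
    Set (Matrix (Fin 3) (Fin 3) ℝ × EuclideanSpace ℝ (Fin 3)) :=
  { Qs | Qs.2 = centroid x ∧ ∃ lam : Fin 3 → ℝ, IsSortedEigs (cov x) lam ∧
      ∀ j : Fin 3, ‖toE (Qs.1ᵀ j)‖ = 1 ∧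
        (cov x).mulVec (Qs.1ᵀ j) = lam j • Qs.1ᵀ j }


/-- The frame-averaged predictor: the equally-weighted average over the frame set of the
back-transformed network outputs,
`Φ(x) = |F(x)|⁻¹ • Σ_{(Q,s) ∈ F(x)} (Q (φ (i ↦ Qᵀ (x i − s))) + s)`. -/
noncomputable def frameAvg {m : ℕ}
    (φ : (Fin m → EuclideanSpace ℝ (Fin 3)) → EuclideanSpace ℝ (Fin 3))
    (x : Fin m → EuclideanSpace ℝ (Fin 3)) : EuclideanSpace ℝ (Fin 3) :=
  ((frameSet x).ncard : ℝ)⁻¹ •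
    ∑ᶠ Qs ∈ frameSet x,
      (toE (Qs.1.mulVec (φ fun i => toE (Qs.1ᵀ.mulVec (x i - Qs.2)))) + Qs.2)

/- ### auxiliary lemmas -/

noncomputable def L (U : Matrix (Fin 3) (Fin 3) ℝ) :
    EuclideanSpace ℝ (Fin 3) →ₗ[ℝ] EuclideanSpace ℝ (Fin 3) where
  toFun v := toE (U.mulVec v)
  map_add' a b := congrArg toE (Matrix.mulVec_add U a b)
  map_smul' c a := congrArg toE (Matrix.mulVec_smul U c a)

lemma Lmap_apply (U : Matrix (Fin 3) (Fin 3) ℝ) (v : EuclideanSpace ℝ (Fin 3)) :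
    L U v = toE (U.mulVec v) := rfl

lemma centroid_map {m : ℕ} (hm : 1 ≤ m) (x : Fin m → EuclideanSpace ℝ (Fin 3))
    (U : Matrix (Fin 3) (Fin 3) ℝ) (w : EuclideanSpace ℝ (Fin 3)) :
    centroid (fun i => toE (U.mulVec (x i)) + w) = toE (U.mulVec (centroid x)) + w := by
  have hm' : (m : ℝ) ≠ 0 := by positivity
  unfold centroid
  have h1 : ∑ i : Fin m, (toE (U.mulVec (x i)) + w) = L U (∑ i, x i) + (m : ℝ) • w := by
    rw [Finset.sum_add_distrib, map_sum, Finset.sum_const, Finset.card_univ, Fintype.card_fin,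
      Nat.cast_smul_eq_nsmul]
    rfl
  rw [h1, smul_add, smul_smul, inv_mul_cancel₀ hm', one_smul, ← _root_.map_smul]
  rfl

lemma sub_centroid_map (U : Matrix (Fin 3) (Fin 3) ℝ) (w a b : EuclideanSpace ℝ (Fin 3)) :
    (toE (U.mulVec a) + w) - (toE (U.mulVec b) + w) = toE (U.mulVec (a - b)) := by
  have h : toE (U.mulVec (a - b)) = toE (U.mulVec a) - toE (U.mulVec b) :=
    congrArg toE (Matrix.mulVec_sub U a b)
  rw [h]; abel

lemma outerSq_map (U : Matrix (Fin 3) (Fin 3) ℝ) (v : EuclideanSpace ℝ (Fin 3)) :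
    outerSq (toE (U.mulVec v)) = U * outerSq v * Uᵀ := by
  ext a b
  simp only [outerSq, Matrix.mul_apply, Matrix.of_apply, toE, Matrix.mulVec, dotProduct,
    Matrix.transpose_apply, PiLp.toLp_apply, WithLp.ofLp_toLp]
  rw [Finset.sum_mul_sum]
  rw [Finset.sum_comm]
  refine Finset.sum_congr rfl fun d _ => ?_
  rw [Finset.sum_mul]
  refine Finset.sum_congr rfl fun c _ => ?_
  ring

lemma cov_map {m : ℕ} (hm : 1 ≤ m) (x : Fin m → EuclideanSpace ℝ (Fin 3))
    (U : Matrix (Fin 3) (Fin 3) ℝ) (w : EuclideanSpace ℝ (Fin 3)) :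
    cov (fun i => toE (U.mulVec (x i)) + w) = U * cov x * Uᵀ := by
  unfold cov
  rw [centroid_map hm]
  have h1 : ∀ i : Fin m, outerSq ((toE (U.mulVec (x i)) + w) - (toE (U.mulVec (centroid x)) + w))
      = U * outerSq (x i - centroid x) * Uᵀ := by
    intro i
    rw [sub_centroid_map, outerSq_map]
    rfl
  calc (m : ℝ)⁻¹ • ∑ i, outerSq ((toE (U.mulVec (x i)) + w) - (toE (U.mulVec (centroid x)) + w))
      = (m : ℝ)⁻¹ • ∑ i, U * outerSq (x i - centroid x) * Uᵀ := by
        rw [Finset.sum_congr rfl fun i _ => h1 i]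
    _ = U * ((m : ℝ)⁻¹ • ∑ i, outerSq (x i - centroid x)) * Uᵀ := by
        rw [← Finset.sum_mul, ← Finset.mul_sum, Matrix.mul_smul, Matrix.smul_mul]

lemma dot_self_eq (f : Fin 3 → ℝ) : ∑ i, ‖f i‖ ^ 2 = f ⬝ᵥ f := by
  simp [dotProduct, Real.norm_eq_abs, sq_abs, sq]

lemma norm_mulVec (U : Matrix (Fin 3) (Fin 3) ℝ) (hU : U * Uᵀ = 1) (v : Fin 3 → ℝ) :
    ‖toE (U.mulVec v)‖ = ‖toE v‖ := by
  have hUt : Uᵀ * U = 1 := mul_eq_one_comm.mp hU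
  rw [EuclideanSpace.norm_eq, EuclideanSpace.norm_eq]
  congr 1
  have h2 : (U.mulVec v) ⬝ᵥ (U.mulVec v) = v ⬝ᵥ v := by
    rw [Matrix.dotProduct_mulVec, ← Matrix.mulVec_transpose, Matrix.mulVec_mulVec, hUt,
      Matrix.one_mulVec]
  calc ∑ i, ‖toE (U.mulVec v) i‖ ^ 2 = (U.mulVec v) ⬝ᵥ (U.mulVec v) := dot_self_eq _
    _ = v ⬝ᵥ v := h2
    _ = ∑ i, ‖toE v i‖ ^ 2 := (dot_self_eq _).symm

lemma col_eq (M : Matrix (Fin 3) (Fin 3) ℝ) (Q : Matrix (Fin 3) (Fin 3) ℝ) (j : Fin 3) :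
    (M * Q)ᵀ j = M.mulVec (Qᵀ j) := by
  funext i
  simp [Matrix.transpose_apply, Matrix.mul_apply, Matrix.mulVec, dotProduct]

lemma mulVec_single_col (M : Matrix (Fin 3) (Fin 3) ℝ) (j : Fin 3) :
    M.mulVec (Pi.single j 1) = Mᵀ j := by
  funext a
  simp [Matrix.mulVec, dotProduct, Pi.single_apply]

lemma unit_col (P : Matrix (Fin 3) (Fin 3) ℝ) (h : Pᵀ * P = 1) (i : Fin 3) :
    ‖toE (Pᵀ i)‖ = 1 := by
  rw [EuclideanSpace.norm_eq]
  have h1 : ∑ a, ‖toE (Pᵀ i) a‖ ^ 2 = (Pᵀ * P) i i := by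
    rw [Matrix.mul_apply]
    simp [toE, Real.norm_eq_abs, sq_abs, sq, Matrix.transpose_apply]
  rw [h1, h]
  simp

lemma frameSet_map_subset {m : ℕ} (hm : 1 ≤ m) (x : Fin m → EuclideanSpace ℝ (Fin 3))
    (U : Matrix (Fin 3) (Fin 3) ℝ) (hU : U * Uᵀ = 1) (w : EuclideanSpace ℝ (Fin 3)) :
    ∀ Qs ∈ frameSet x,
      ((U * Qs.1, toE (U.mulVec Qs.2) + w) :
        Matrix (Fin 3) (Fin 3) ℝ × EuclideanSpace ℝ (Fin 3)) ∈
        frameSet (fun i => toE (U.mulVec (x i)) + w) := by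
  rintro ⟨Q, s⟩ ⟨hs, lam', ⟨hmono, P, hP, hC⟩, hcols⟩
  have hUt : Uᵀ * U = 1 := mul_eq_one_comm.mp hU
  have hcov := cov_map hm x U w
  refine ⟨?_, lam', ⟨hmono, U * P, ?_, ?_⟩, ?_⟩
  · rw [centroid_map hm]
    simp only at hs
    rw [hs]
  · rw [Matrix.transpose_mul, show U * P * (Pᵀ * Uᵀ) = U * (P * Pᵀ) * Uᵀ by
      rw [Matrix.mul_assoc, Matrix.mul_assoc, Matrix.mul_assoc], hP, Matrix.mul_one, hU]
  · rw [hcov, hC, Matrix.transpose_mul]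
    simp only [Matrix.mul_assoc]
  · intro j
    have hcol : ((U * Q)ᵀ j) = U.mulVec (Qᵀ j) := col_eq U Q j
    obtain ⟨hn, he⟩ := hcols j
    constructor
    · show ‖toE ((U * Q)ᵀ j)‖ = 1
      rw [hcol, norm_mulVec U hU, hn]
    · show (cov fun i => toE (U.mulVec (x i)) + w).mulVec ((U * Q)ᵀ j) = lam' j • (U * Q)ᵀ j
      rw [hcol, hcov, Matrix.mulVec_mulVec,
        show U * cov x * Uᵀ * U = U * cov x by
          rw [Matrix.mul_assoc, hUt, Matrix.mul_one],
        ← Matrix.mulVec_mulVec, he, Matrix.mulVec_smul]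

lemma frameSet_map {m : ℕ} (hm : 1 ≤ m) (x : Fin m → EuclideanSpace ℝ (Fin 3))
    (U : Matrix (Fin 3) (Fin 3) ℝ) (hU : U * Uᵀ = 1) (w : EuclideanSpace ℝ (Fin 3)) :
    frameSet (fun i => toE (U.mulVec (x i)) + w) =
      (fun Qs : Matrix (Fin 3) (Fin 3) ℝ × EuclideanSpace ℝ (Fin 3) =>
        (U * Qs.1, toE (U.mulVec Qs.2) + w)) '' frameSet x := by
  have hUt : Uᵀ * U = 1 := mul_eq_one_comm.mp hU
  apply Set.Subset.antisymm
  · intro Qs h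
    set x' := fun i => toE (U.mulVec (x i)) + w with hx'
    have hback : (fun i => toE (Uᵀ.mulVec (x' i)) + toE (-(Uᵀ.mulVec w))) = x := by
      funext i
      have e1 : Uᵀ.mulVec (x' i) = Uᵀ.mulVec (U.mulVec (x i)) + Uᵀ.mulVec w :=
        Matrix.mulVec_add _ _ _
      have e2 : Uᵀ.mulVec (U.mulVec (x i)) = x i := by
        rw [Matrix.mulVec_mulVec, hUt, Matrix.one_mulVec]
      show toE (Uᵀ.mulVec (x' i)) + toE (-(Uᵀ.mulVec w)) = x i
      rw [e1, e2]
      show (x i + toE (Uᵀ.mulVec w)) + (- toE (Uᵀ.mulVec w)) = x i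
      abel
    have h2 := frameSet_map_subset hm x' Uᵀ (by rwa [Matrix.transpose_transpose]) (toE (-(Uᵀ.mulVec w))) Qs h
    rw [hback] at h2
    refine ⟨(Uᵀ * Qs.1, toE (Uᵀ.mulVec Qs.2) + toE (-(Uᵀ.mulVec w))), h2, ?_⟩
    have hQ : U * (Uᵀ * Qs.1) = Qs.1 := by rw [← Matrix.mul_assoc, hU, Matrix.one_mul]
    have hs : toE (U.mulVec (toE (Uᵀ.mulVec Qs.2) + toE (-(Uᵀ.mulVec w)))) + w = Qs.2 := by
      have h3 : U.mulVec ((toE (Uᵀ.mulVec Qs.2) + toE (-(Uᵀ.mulVec w)) : EuclideanSpace ℝ (Fin 3))) =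
          U.mulVec (Uᵀ.mulVec Qs.2) + U.mulVec (-(Uᵀ.mulVec w)) := Matrix.mulVec_add _ _ _
      show toE (U.mulVec ((toE (Uᵀ.mulVec Qs.2) + toE (-(Uᵀ.mulVec w)) : EuclideanSpace ℝ (Fin 3)))) + w = Qs.2
      rw [h3, Matrix.mulVec_mulVec, hU, Matrix.one_mulVec, Matrix.mulVec_neg,
        Matrix.mulVec_mulVec, hU, Matrix.one_mulVec]
      show (Qs.2 + - w) + w = Qs.2
      abel
    exact Prod.ext hQ hs
  · rintro _ ⟨Qs, hQs, rfl⟩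
    exact frameSet_map_subset hm x U hU w Qs hQs

lemma eig_col (C P : Matrix (Fin 3) (Fin 3) ℝ) (lam : Fin 3 → ℝ)
    (hP : P * Pᵀ = 1) (hC : C = P * Matrix.diagonal lam * Pᵀ)
    (hdist : Function.Injective lam)
    (q : Fin 3 → ℝ) (hq : ‖toE q‖ = 1) (μ : ℝ) (he : C.mulVec q = μ • q) :
    ∃ (i : Fin 3) (ε : ℝ), (ε = 1 ∨ ε = -1) ∧ q = ε • Pᵀ i := by
  classical
  have hPt : Pᵀ * P = 1 := mul_eq_one_comm.mp hP
  set v : Fin 3 → ℝ := Pᵀ.mulVec q with hv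
  have hqv : q = P.mulVec v := by
    rw [hv, Matrix.mulVec_mulVec, hP, Matrix.one_mulVec]
  have hDv : (Matrix.diagonal lam).mulVec v = μ • v := by
    have h1 : Pᵀ * C = Matrix.diagonal lam * Pᵀ := by
      rw [hC, ← Matrix.mul_assoc, ← Matrix.mul_assoc, hPt, Matrix.one_mul]
    calc (Matrix.diagonal lam).mulVec v = (Matrix.diagonal lam * Pᵀ).mulVec q := by
          rw [← Matrix.mulVec_mulVec]
      _ = (Pᵀ * C).mulVec q := by rw [h1]
      _ = Pᵀ.mulVec (C.mulVec q) := (Matrix.mulVec_mulVec _ _ _).symm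
      _ = Pᵀ.mulVec (μ • q) := by rw [he]
      _ = μ • v := Matrix.mulVec_smul _ _ _
  have hcomp : ∀ k, lam k * v k = μ * v k := by
    intro k
    have := congrFun hDv k
    rwa [Matrix.mulVec_diagonal] at this
  have hvne : v ≠ 0 := by
    intro h0
    have : q = 0 := by rw [hqv, h0, Matrix.mulVec_zero]
    rw [this] at hq
    have h0' : ‖toE (0 : Fin 3 → ℝ)‖ = 0 := norm_zero
    rw [h0'] at hq
    norm_num at hq
  obtain ⟨i, hi⟩ : ∃ i, v i ≠ 0 := by
    by_contra hcon
    push_neg at hcon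
    exact hvne (funext hcon)
  have hmu : μ = lam i := by
    have := hcomp i
    exact (mul_right_cancel₀ hi this).symm
  have hzero : ∀ k, k ≠ i → v k = 0 := by
    intro k hk
    have h1 := hcomp k
    rw [hmu] at h1
    by_contra hvk
    exact hk (hdist (mul_right_cancel₀ hvk h1))
  have hveq : v = Pi.single i (v i) := by
    funext k
    by_cases h : k = i
    · subst h; simp
    · simp [Pi.single_apply, h, hzero k h]
  have hq2 : q = v i • Pᵀ i := by
    have hsingle : (Pi.single i (v i) : Fin 3 → ℝ) = v i • (Pi.single i 1 : Fin 3 → ℝ) := by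
      funext k; by_cases h : k = i <;> simp [Pi.single_apply, h]
    calc q = P.mulVec (Pi.single i (v i)) := by rw [← hveq, ← hqv]
      _ = v i • Pᵀ i := by rw [hsingle, Matrix.mulVec_smul, mulVec_single_col]
  have habs : |v i| = 1 := by
    have h1 : ‖toE q‖ = |v i| * ‖toE (Pᵀ i)‖ := by
      rw [hq2]
      have : toE (v i • Pᵀ i) = v i • toE (Pᵀ i) := rfl
      rw [this, norm_smul, Real.norm_eq_abs]
    rw [unit_col P hPt i, mul_one] at h1
    rw [← h1, hq]
  have := abs_eq (le_of_lt one_pos) |>.mp habs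
  exact ⟨i, v i, this, hq2⟩

lemma frameSet_finite {m : ℕ} (x : Fin m → EuclideanSpace ℝ (Fin 3))
    (lam : Fin 3 → ℝ) (hlam : IsSortedEigs (cov x) lam) (hdist : Function.Injective lam) :
    (frameSet x).Finite := by
  classical
  obtain ⟨hmono, P, hP, hC⟩ := hlam
  apply Set.Finite.subset (Set.finite_range
    (fun f : Fin 3 → Bool × Fin 3 =>
      ((Matrix.of fun a j => (if (f j).1 then (1:ℝ) else -1) * P a (f j).2, centroid x) :
        Matrix (Fin 3) (Fin 3) ℝ × EuclideanSpace ℝ (Fin 3))))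
  rintro ⟨Q, s⟩ ⟨hs, lam', _, hcols⟩
  choose i ε hε hcol using fun j =>
    eig_col (cov x) P lam hP hC hdist (Qᵀ j) (hcols j).1 (lam' j) (hcols j).2
  refine ⟨fun j => (if ε j = 1 then true else false, i j), ?_⟩
  refine Prod.ext ?_ (by simpa using hs.symm)
  ext a j
  simp only [Matrix.of_apply]
  have h1 : Q a j = ε j * P a (i j) := by
    have := congrFun (hcol j) a
    simpa [Matrix.transpose_apply] using this
  rcases hε j with h | h
  · simp [h, h1]
  · have hne1 : ε j ≠ 1 := by rw [h]; norm_num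
    have hfalse : (if ε j = 1 then true else false) = false := by simp [hne1]
    simp only [hfalse]
    rw [h1, h]
    norm_num

lemma frameSet_nonempty {m : ℕ} (x : Fin m → EuclideanSpace ℝ (Fin 3))
    (lam : Fin 3 → ℝ) (hlam : IsSortedEigs (cov x) lam) :
    (frameSet x).Nonempty := by
  obtain ⟨hmono, P, hP, hC⟩ := hlam
  have hPt : Pᵀ * P = 1 := mul_eq_one_comm.mp hP
  refine ⟨(P, centroid x), rfl, lam, ⟨hmono, P, hP, hC⟩, fun j => ⟨unit_col P hPt j, ?_⟩⟩
  have h1 : cov x * P = P * Matrix.diagonal lam := by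
    rw [hC, Matrix.mul_assoc, hPt, Matrix.mul_one]
  have h2 : (cov x).mulVec (Pᵀ j) = (cov x * P).mulVec (Pi.single j 1) := by
    rw [← Matrix.mulVec_mulVec, mulVec_single_col]
  show (cov x).mulVec (Pᵀ j) = lam j • Pᵀ j
  rw [h2, h1, mulVec_single_col]
  funext a
  simp [Matrix.transpose_apply, Matrix.mul_diagonal, mul_comm]

lemma avg_step (U : Matrix (Fin 3) (Fin 3) ℝ) (w : EuclideanSpace ℝ (Fin 3))
    {α : Type*} (T : Finset α) (t : α → EuclideanSpace ℝ (Fin 3))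
    (hT : (T.card : ℝ) ≠ 0) :
    (T.card : ℝ)⁻¹ • ∑ Qs ∈ T, (toE (U.mulVec (t Qs)) + w) =
      toE (U.mulVec ((T.card : ℝ)⁻¹ • ∑ Qs ∈ T, t Qs)) + w := by
  have h1 : ∑ Qs ∈ T, (toE (U.mulVec (t Qs)) + w) = L U (∑ Qs ∈ T, t Qs) + (T.card : ℝ) • w := by
    rw [Finset.sum_add_distrib, map_sum, Finset.sum_const, Nat.cast_smul_eq_nsmul]
    rfl
  rw [h1, smul_add, smul_smul, inv_mul_cancel₀ hT, one_smul, ← _root_.map_smul]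
  rfl


/-- **The frame-averaged predictor is E(3)-equivariant.** If the covariance matrix of the
configuration `x` has three pairwise distinct eigenvalues, then for any function `φ` and
any Euclidean motion `p ↦ U p + w` (with `U * Uᵀ = 1`), averaging over the frame set
commutes with the motion: `Φ(i ↦ U (x i) + w) = U (Φ(x)) + w`. -/
theorem frameAvg_equivariant {m : ℕ} (hm : 1 ≤ m)
    (x : Fin m → EuclideanSpace ℝ (Fin 3))
    (lam : Fin 3 → ℝ) (hlam : IsSortedEigs (cov x) lam) (hdist : Function.Injective lam)
    (φ : (Fin m → EuclideanSpace ℝ (Fin 3)) → EuclideanSpace ℝ (Fin 3))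
    (U : Matrix (Fin 3) (Fin 3) ℝ) (hU : U * Uᵀ = 1) (w : EuclideanSpace ℝ (Fin 3)) :
    frameAvg φ (fun i => toE (U.mulVec (x i)) + w) = toE (U.mulVec (frameAvg φ x)) + w := by
  classical
  have hUt : Uᵀ * U = 1 := mul_eq_one_comm.mp hU
  have hfin : (frameSet x).Finite := frameSet_finite x lam hlam hdist
  have hne : (frameSet x).Nonempty := frameSet_nonempty x lam hlam
  have hginj : Function.Injective
      (fun Qs : Matrix (Fin 3) (Fin 3) ℝ × EuclideanSpace ℝ (Fin 3) =>
        ((U * Qs.1, toE (U.mulVec Qs.2) + w) :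
          Matrix (Fin 3) (Fin 3) ℝ × EuclideanSpace ℝ (Fin 3))) := by
    rintro ⟨Q1, s1⟩ ⟨Q2, s2⟩ h
    simp only [Prod.mk.injEq] at h
    obtain ⟨h1, h2⟩ := h
    have hQ : Q1 = Q2 := by
      have h3 := congrArg (fun M => Uᵀ * M) h1
      simpa [← Matrix.mul_assoc, hUt] using h3
    have hw : toE (U.mulVec s1) = toE (U.mulVec s2) := by
      have h4 := congrArg (fun v => v - w) h2
      simpa using h4
    have hs : s1 = s2 := by
      have h3 : Uᵀ.mulVec (U.mulVec s1) = Uᵀ.mulVec (U.mulVec s2) :=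
        congrArg (fun v : EuclideanSpace ℝ (Fin 3) => Uᵀ.mulVec v) hw
      rw [Matrix.mulVec_mulVec, hUt, Matrix.one_mulVec, Matrix.mulVec_mulVec, hUt,
        Matrix.one_mulVec] at h3
      exact WithLp.ofLp_injective 2 h3
    exact Prod.ext hQ hs
  have himg := frameSet_map hm x U hU w
  have hterm : ∀ Qs ∈ frameSet x,
      (toE ((U * Qs.1).mulVec (φ fun i => toE ((U * Qs.1)ᵀ.mulVec
          ((fun i => toE (U.mulVec (x i)) + w) i - (toE (U.mulVec Qs.2) + w : EuclideanSpace ℝ (Fin 3))))))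
        + (toE (U.mulVec Qs.2) + w))
      = toE (U.mulVec (toE (Qs.1.mulVec (φ fun i => toE (Qs.1ᵀ.mulVec (x i - Qs.2)))) + Qs.2 : EuclideanSpace ℝ (Fin 3)))
        + w := by
    intro Qs _
    have harg : (fun i => toE ((U * Qs.1)ᵀ.mulVec
        ((fun i => toE (U.mulVec (x i)) + w) i - (toE (U.mulVec Qs.2) + w : EuclideanSpace ℝ (Fin 3)))))
        = fun i => toE (Qs.1ᵀ.mulVec (x i - Qs.2)) := by
      funext i
      have h1 : ((toE (U.mulVec (x i)) + w) - (toE (U.mulVec Qs.2) + w) :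
          EuclideanSpace ℝ (Fin 3)) = toE (U.mulVec (x i - Qs.2)) :=
        sub_centroid_map U w (x i) Qs.2
      show toE ((U * Qs.1)ᵀ.mulVec
        ((toE (U.mulVec (x i)) + w : EuclideanSpace ℝ (Fin 3)) - (toE (U.mulVec Qs.2) + w : EuclideanSpace ℝ (Fin 3)))) = _
      rw [← WithLp.ofLp_sub, h1]
      show toE ((U * Qs.1)ᵀ.mulVec (U.mulVec (x i - Qs.2))) = _
      rw [Matrix.transpose_mul, Matrix.mulVec_mulVec, Matrix.mul_assoc, hUt, Matrix.mul_one]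
    rw [harg]
    have h2 : (U * Qs.1).mulVec (φ fun i => toE (Qs.1ᵀ.mulVec (x i - Qs.2)))
        = U.mulVec (Qs.1.mulVec (φ fun i => toE (Qs.1ᵀ.mulVec (x i - Qs.2)))) :=
      (Matrix.mulVec_mulVec _ _ _).symm
    rw [h2]
    have h3 : U.mulVec ((toE (Qs.1.mulVec (φ fun i => toE (Qs.1ᵀ.mulVec (x i - Qs.2)))) + Qs.2 :
        EuclideanSpace ℝ (Fin 3)))
        = U.mulVec (Qs.1.mulVec (φ fun i => toE (Qs.1ᵀ.mulVec (x i - Qs.2)))) + U.mulVec Qs.2 :=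
      Matrix.mulVec_add _ _ _
    show toE (U.mulVec (Qs.1.mulVec (φ fun i => toE (Qs.1ᵀ.mulVec (x i - Qs.2)))))
        + (toE (U.mulVec Qs.2) + w) = _
    rw [h3]
    show toE (U.mulVec (Qs.1.mulVec (φ fun i => toE (Qs.1ᵀ.mulVec (x i - Qs.2)))))
        + (toE (U.mulVec Qs.2) + w)
      = (toE (U.mulVec (Qs.1.mulVec (φ fun i => toE (Qs.1ᵀ.mulVec (x i - Qs.2)))))
        + toE (U.mulVec Qs.2)) + w
    abel
  unfold frameAvg
  rw [himg, finsum_mem_image hginj.injOn, Set.ncard_image_of_injective _ hginj,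
    finsum_mem_congr rfl hterm, finsum_mem_eq_finite_toFinset_sum _ hfin,
    finsum_mem_eq_finite_toFinset_sum _ hfin, Set.ncard_eq_toFinset_card _ hfin]
  have hcne : ((hfin.toFinset.card : ℕ) : ℝ) ≠ 0 := by
    have hpos : 0 < (frameSet x).ncard := (Set.ncard_pos hfin).mpr hne
    rw [Set.ncard_eq_toFinset_card _ hfin] at hpos
    exact_mod_cast hpos.ne'
  exact avg_step U w hfin.toFinset
    (fun Qs => toE (Qs.1.mulVec (φ fun i => toE (Qs.1ᵀ.mulVec (x i - Qs.2)))) + Qs.2) hcne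
end

section
/- Let m ≥ 1 and let x : Fin m → EuclideanSpace ℝ (Fin 3) be a point configuration whose covariance matrix Cov(x) has three pairwise distinct eigenvalues λ₁ < λ₂ < λ₃. Then the frame set F(x) has exactly 8 elements: for each j the set of unit eigenvectors of Cov(x) with eigenvalue λⱼ is exactly {vⱼ, −vⱼ} for some unit vector vⱼ, so the admissible matrices Q are precisely the eight matrices with columns (±v₁, ±v₂, ±v₃). -/
open Matrix

namespace FrameAux

variable {P C : Matrix (Fin 3) (Fin 3) ℝ} {lam : Fin 3 → ℝ}

lemma ortho_left (hP : P * Pᵀ = 1) : Pᵀ * P = 1 :=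
  mul_eq_one_comm.mp hP

lemma col_sq_sum (hP : P * Pᵀ = 1) (k : Fin 3) : ∑ i, P i k ^ 2 = 1 := by
  have h : (Pᵀ * P) k k = (1 : Matrix (Fin 3) (Fin 3) ℝ) k k := by rw [ortho_left hP]
  simpa [Matrix.mul_apply, Matrix.one_apply, pow_two] using h

lemma norm_col (hP : P * Pᵀ = 1) (k : Fin 3) : ‖toE (Pᵀ k)‖ = 1 := by
  rw [EuclideanSpace.norm_eq]
  simp only [toE, Matrix.transpose_apply, Real.norm_eq_abs, sq_abs]
  rw [col_sq_sum hP k, Real.sqrt_one]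

lemma col_eigen (hP : P * Pᵀ = 1) (hC : C = P * Matrix.diagonal lam * Pᵀ) (k : Fin 3) :
    C.mulVec (Pᵀ k) = lam k • (Pᵀ k) := by
  have hCP : C * P = P * Matrix.diagonal lam := by
    rw [hC, Matrix.mul_assoc (P * Matrix.diagonal lam), ortho_left hP, Matrix.mul_one]
  funext i
  have h1 : (C * P) i k = (P * Matrix.diagonal lam) i k := by rw [hCP]
  rw [Matrix.mul_diagonal] at h1
  simp only [Matrix.mulVec, dotProduct, Matrix.transpose_apply, Pi.smul_apply,
    smul_eq_mul]
  rw [show ∑ j, C i j * P j k = (C * P) i k from rfl, h1, mul_comm]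

lemma mulVec_inj (hP : P * Pᵀ = 1) : Function.Injective (P.mulVec) := by
  intro y z h
  have := congrArg (Pᵀ.mulVec) h
  rwa [Matrix.mulVec_mulVec, Matrix.mulVec_mulVec, ortho_left hP, Matrix.one_mulVec,
    Matrix.one_mulVec] at this

lemma eig_decomp (hP : P * Pᵀ = 1) (hC : C = P * Matrix.diagonal lam * Pᵀ)
    (hinj : Function.Injective lam) {u : Fin 3 → ℝ} {μ : ℝ}
    (hu : C.mulVec u = μ • u) (hu0 : u ≠ 0) :
    ∃ (k : Fin 3) (a : ℝ), a ≠ 0 ∧ μ = lam k ∧ u = a • (Pᵀ k) := by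
  set c := Pᵀ.mulVec u with hc
  have hrec : P.mulVec c = u := by
    rw [hc, Matrix.mulVec_mulVec, hP, Matrix.one_mulVec]
  have hD : (Matrix.diagonal lam).mulVec c = μ • c := by
    apply mulVec_inj hP
    rw [Matrix.mulVec_smul, hrec, ← hu, hC, hc]
    rw [Matrix.mulVec_mulVec, Matrix.mulVec_mulVec, Matrix.mul_assoc]
  have hent : ∀ k, lam k * c k = μ * c k := by
    intro k
    have := congrFun hD k
    simpa [Matrix.mulVec, dotProduct, Matrix.diagonal] using this
  have hc0 : c ≠ 0 := by
    intro h
    exact hu0 (by rw [← hrec, h, Matrix.mulVec_zero])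
  obtain ⟨k, hk⟩ : ∃ k, c k ≠ 0 := by
    by_contra h
    push_neg at h
    exact hc0 (funext h)
  have hμ : μ = lam k := (mul_right_cancel₀ hk (hent k)).symm
  have hzero : ∀ j, j ≠ k → c j = 0 := by
    intro j hj
    by_contra h
    exact hj (hinj (mul_right_cancel₀ h ((hent j).trans (by rw [hμ]))))
  refine ⟨k, c k, hk, hμ, ?_⟩
  funext i
  rw [← hrec]
  simp only [Matrix.mulVec, dotProduct, Pi.smul_apply, smul_eq_mul,
    Matrix.transpose_apply]
  rw [Finset.sum_eq_single k]
  · ring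
  · intro j _ hj; rw [hzero j hj, mul_zero]
  · intro h; exact absurd (Finset.mem_univ k) h

lemma eig_unit (hP : P * Pᵀ = 1) (hC : C = P * Matrix.diagonal lam * Pᵀ)
    (hinj : Function.Injective lam) {u : Fin 3 → ℝ} {μ : ℝ}
    (hu : C.mulVec u = μ • u) (hnorm : ‖toE u‖ = 1) :
    ∃ k, μ = lam k ∧ (u = Pᵀ k ∨ u = -(Pᵀ k)) := by
  have hu0 : u ≠ 0 := by
    intro h
    rw [h, show toE 0 = (0 : EuclideanSpace ℝ (Fin 3)) from rfl, norm_zero] at hnorm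
    norm_num at hnorm
  obtain ⟨k, a, ha, hμ, huv⟩ := eig_decomp hP hC hinj hu hu0
  have habs : |a| = 1 := by
    have h1 : toE u = a • toE (Pᵀ k) := by rw [huv]; rfl
    have h2 : ‖toE u‖ = |a| * ‖toE (Pᵀ k)‖ := by
      rw [h1, norm_smul, Real.norm_eq_abs]
    rw [hnorm, norm_col hP k, mul_one] at h2
    exact h2.symm
  rcases abs_eq (by norm_num : (0:ℝ) ≤ 1) |>.mp habs with h | h
  · exact ⟨k, hμ, Or.inl (by rw [huv, h, one_smul])⟩
  · exact ⟨k, hμ, Or.inr (by rw [huv, h]; funext i; simp)⟩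

lemma col_ne_zero (hP : P * Pᵀ = 1) (k : Fin 3) : (Pᵀ k : Fin 3 → ℝ) ≠ 0 := by
  intro h
  have := col_sq_sum hP k
  rw [Finset.sum_eq_zero (fun i _ => by
    rw [show P i k = (Pᵀ k) i from rfl, h]; norm_num)] at this
  norm_num at this

lemma lam_unique (hP : P * Pᵀ = 1) (hC : C = P * Matrix.diagonal lam * Pᵀ)
    (hdist : StrictMono lam) {lam' : Fin 3 → ℝ}
    (h' : ∃ P' : Matrix (Fin 3) (Fin 3) ℝ, P' * P'ᵀ = 1 ∧
      C = P' * Matrix.diagonal lam' * P'ᵀ) (hmono' : Monotone lam') : lam' = lam := by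
  obtain ⟨P', hP', hC'⟩ := h'
  have hcol : ∀ k, C.mulVec (P'ᵀ k) = lam' k • P'ᵀ k := col_eigen hP' hC'
  choose σ a ha hσ hv using fun k =>
    eig_decomp hP hC hdist.injective (hcol k) (col_ne_zero hP' k)
  have hσinj : Function.Injective σ := by
    intro k1 k2 hk
    by_contra hne
    have h0 : (P'ᵀ * P') k1 k2 = 0 := by
      rw [ortho_left hP']
      simp [Matrix.one_apply, hne]
    rw [Matrix.mul_apply] at h0
    have hdot : ∑ i, P' i k1 * P' i k2 = 0 := by
      simpa using h0
    have hre : ∑ i, P' i k1 * P' i k2 = a k1 * a k2 * ∑ i, P i (σ k1) ^ 2 := by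
      rw [Finset.mul_sum]
      refine Finset.sum_congr rfl fun i _ => ?_
      rw [show P' i k1 = a k1 * P i (σ k1) from congrFun (hv k1) i,
        show P' i k2 = a k2 * P i (σ k2) from congrFun (hv k2) i, ← hk]
      ring
    rw [hre, col_sq_sum hP, mul_one] at hdot
    exact (mul_ne_zero (ha k1) (ha k2)) hdot
  have hσmono : StrictMono σ := by
    intro k1 k2 h12
    have hle : σ k1 ≤ σ k2 := by
      have : lam (σ k1) ≤ lam (σ k2) := by
        rw [← hσ k1, ← hσ k2]; exact hmono' h12.le
      exact hdist.le_iff_le.mp this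
    exact lt_of_le_of_ne hle fun h => absurd (hσinj h) h12.ne
  have hσid : ∀ k, σ k = k := by
    have n01 : (σ 0).val < (σ 1).val := hσmono (show (0:Fin 3) < 1 by decide)
    have n12 : (σ 1).val < (σ 2).val := hσmono (show (1:Fin 3) < 2 by decide)
    have l2 : (σ 2).val < 3 := (σ 2).isLt
    intro k
    fin_cases k
    · show σ 0 = 0; exact Fin.ext (by omega)
    · show σ 1 = 1; exact Fin.ext (by omega)
    · show σ 2 = 2; exact Fin.ext (by omega)
  funext k
  rw [hσ k, hσid k]

end FrameAux

namespace FrameAux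

def sgn (b : Bool) : ℝ := if b then 1 else -1

lemma sgn_abs (b : Bool) : |sgn b| = 1 := by cases b <;> norm_num [sgn]

lemma sgn_injective : Function.Injective sgn := by
  intro b b' h
  cases b <;> cases b' <;> first | rfl | (norm_num [sgn] at h)

def flipCols (P : Matrix (Fin 3) (Fin 3) ℝ) (ε : Fin 3 → Bool) :
    Matrix (Fin 3) (Fin 3) ℝ :=
  Matrix.of fun i j => sgn (ε j) * P i j

lemma flipCols_col (P : Matrix (Fin 3) (Fin 3) ℝ) (ε : Fin 3 → Bool) (j : Fin 3) :
    (flipCols P ε)ᵀ j = sgn (ε j) • Pᵀ j := by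
  funext i
  rfl

end FrameAux

/-- **The frame set has exactly 8 elements.** If the covariance matrix of `x` has three
pairwise distinct eigenvalues `λ₁ < λ₂ < λ₃`, then for each `j` the set of unit
eigenvectors of `Cov(x)` with eigenvalue `λⱼ` is exactly `{vⱼ, -vⱼ}` for some unit vector
`vⱼ`, and consequently the frame set has exactly 8 elements (the matrices with columns
`(±v₁, ±v₂, ±v₃)`). -/
theorem frameSet_ncard_eq_eight {m : ℕ} (hm : 1 ≤ m) (x : Fin m → EuclideanSpace ℝ (Fin 3))
    (lam : Fin 3 → ℝ) (hlam : IsSortedEigs (cov x) lam) (hdist : StrictMono lam) :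
    (∀ j : Fin 3, ∃ v : EuclideanSpace ℝ (Fin 3), ‖v‖ = 1 ∧
      {u : EuclideanSpace ℝ (Fin 3) | ‖u‖ = 1 ∧ (cov x).mulVec u = lam j • (u : Fin 3 → ℝ)}
        = {v, -v}) ∧
    (frameSet x).ncard = 8 := by
  classical
  obtain ⟨hmono, P, hP, hC⟩ := hlam
  constructor
  · intro j
    refine ⟨toE (Pᵀ j), FrameAux.norm_col hP j, ?_⟩
    ext u
    simp only [Set.mem_setOf_eq, Set.mem_insert_iff, Set.mem_singleton_iff]
    constructor
    · rintro ⟨hn, he⟩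
      obtain ⟨k, hk, hcase⟩ := FrameAux.eig_unit hP hC hdist.injective he hn
      have hkj : k = j := (hdist.injective hk).symm
      subst hkj
      rcases hcase with h | h
      · exact Or.inl (congrArg toE h)
      · exact Or.inr (congrArg toE h)
    · rintro (h | h) <;> subst h
      · exact ⟨FrameAux.norm_col hP j, FrameAux.col_eigen hP hC j⟩
      · refine ⟨?_, ?_⟩
        · rw [norm_neg]; exact FrameAux.norm_col hP j
        · show (cov x).mulVec (-(Pᵀ j)) = lam j • (-(Pᵀ j))
          rw [Matrix.mulVec_neg, FrameAux.col_eigen hP hC j, smul_neg]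
  · have hset : frameSet x
        = Set.range (fun ε : Fin 3 → Bool => (FrameAux.flipCols P ε, centroid x)) := by
      ext Qs
      simp only [frameSet, Set.mem_setOf_eq, Set.mem_range]
      constructor
      · rintro ⟨ht, lam', ⟨hmono', hdiag'⟩, hcols⟩
        have hlam' : lam' = lam := FrameAux.lam_unique hP hC hdist hdiag' hmono'
        subst hlam'
        have hcol : ∀ j, Qs.1ᵀ j = Pᵀ j ∨ Qs.1ᵀ j = -(Pᵀ j) := by
          intro j
          obtain ⟨hn, he⟩ := hcols j
          obtain ⟨k, hk, hcase⟩ := FrameAux.eig_unit hP hC hdist.injective he hn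
          have hkj : k = j := (hdist.injective hk).symm
          subst hkj
          exact hcase
        refine ⟨fun j => decide (Qs.1ᵀ j = Pᵀ j), ?_⟩
        have h2 : centroid x = Qs.2 := ht.symm
        have h1 : FrameAux.flipCols P (fun j => decide (Qs.1ᵀ j = Pᵀ j)) = Qs.1 := by
          ext i j
          show FrameAux.sgn (decide (Qs.1ᵀ j = Pᵀ j)) * P i j = Qs.1 i j
          by_cases hj : Qs.1ᵀ j = Pᵀ j
          · rw [decide_eq_true hj]
            have hij := congrFun hj i
            simp only [Matrix.transpose_apply] at hij
            rw [hij]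
            norm_num [FrameAux.sgn]
          · rw [decide_eq_false hj]
            have hneg := (hcol j).resolve_left hj
            have hij := congrFun hneg i
            simp only [Matrix.transpose_apply, Pi.neg_apply] at hij
            rw [hij]
            norm_num [FrameAux.sgn]
        calc (FrameAux.flipCols P (fun j => decide (Qs.1ᵀ j = Pᵀ j)), centroid x)
            = (Qs.1, Qs.2) := by rw [h1, h2]
          _ = Qs := rfl
      · rintro ⟨ε, rfl⟩
        refine ⟨rfl, lam, ⟨hmono, P, hP, hC⟩, fun j => ?_⟩
        rw [FrameAux.flipCols_col]
        constructor
        · show ‖toE (FrameAux.sgn (ε j) • Pᵀ j)‖ = 1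
          rw [show toE (FrameAux.sgn (ε j) • Pᵀ j)
                = FrameAux.sgn (ε j) • toE (Pᵀ j) from rfl,
            norm_smul, Real.norm_eq_abs, FrameAux.sgn_abs, one_mul,
            FrameAux.norm_col hP]
        · rw [Matrix.mulVec_smul, FrameAux.col_eigen hP hC j, smul_comm]
    have hfinj : Function.Injective
        (fun ε : Fin 3 → Bool => (FrameAux.flipCols P ε, centroid x)) := by
      intro ε ε' h
      have h1 : FrameAux.flipCols P ε = FrameAux.flipCols P ε' := congrArg Prod.fst h
      funext j
      obtain ⟨i, hi⟩ : ∃ i, P i j ≠ 0 := by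
        by_contra hcon
        push_neg at hcon
        have hs := FrameAux.col_sq_sum hP j
        rw [Finset.sum_eq_zero (fun i _ => by rw [hcon i]; ring)] at hs
        norm_num at hs
      have h2 : FrameAux.sgn (ε j) * P i j = FrameAux.sgn (ε' j) * P i j :=
        congrFun (congrFun h1 i) j
      exact FrameAux.sgn_injective (mul_right_cancel₀ hi h2)
    rw [hset, ← Set.image_univ, Set.ncard_image_of_injective _ hfinj, Set.ncard_univ,
      Nat.card_eq_fintype_card]
    decide
end
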